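/- Let F be a compact hereditary family on an infinite cardinal κ. Then the set { Σ_{ξ∈s} θ_ξ e_ξ* : s ∈ F and (θ_ξ)_{ξ∈s} is a family of scalars with |θ_ξ| = 1 } is closed in the weak* topology of the dual space X_F*. -/

import Mathlib

open scoped Classical

noncomputable section

/-- Characteristic function of a finite set, as an element of the Cantor cube `2^ι`. -/
def chi {ι : Type*} (s : Finset ι) : ι → Bool := fun a => decide (a ∈ s)

/-- The copy of a collection of finite sets inside the Cantor cube `2^ι`. -/
def chiImg {ι : Type*} (F : Set (Finset ι)) : Set (ι → Bool) := chi '' F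

/-- `F` is a family: it contains the empty set and all singletons. -/
def IsFam {ι : Type*} (F : Set (Finset ι)) : Prop := ∅ ∈ F ∧ ∀ a : ι, {a} ∈ F

/-- `F` is hereditary: it is closed under subsets. -/
def IsHereditary {ι : Type*} (F : Set (Finset ι)) : Prop :=
  ∀ ⦃s t : Finset ι⦄, s ⊆ t → t ∈ F → s ∈ F

/-- `F` is compact: its copy in the Cantor cube `2^ι` is closed
(equivalently, compact). -/
def IsCompactFam {ι : Type*} (F : Set (Finset ι)) : Prop := IsClosed (chiImg F)

/-- The set of maximal elements of `F` with respect to inclusion. -/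
def famMAX {ι : Type*} (F : Set (Finset ι)) : Set (Finset ι) :=
  {s ∈ F | ∀ t ∈ F, s ⊆ t → s = t}

/-- The image `{π[s] : s ∈ F}` of a collection of finite sets under a permutation of the
index set. -/
def permImg {ι : Type*} (π : Equiv.Perm ι) (F : Set (Finset ι)) : Set (Finset ι) :=
  (fun s => Finset.image π s) '' F

variable {ι : Type*}

/-- A family of finite subsets of `ι`, containing the empty set and all singletons. -/
structure CombFamily (ι : Type*) where
  sets : Set (Finset ι)
  empty_mem : ∅ ∈ sets
  singleton_mem : ∀ a : ι, {a} ∈ sets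

variable (𝕂 : Type*) [RCLike 𝕂]

/-- The set of candidate values for the norm of `x` in the combinatorial space. -/
def normValues (F : CombFamily ι) (x : ι →₀ 𝕂) : Set ℝ :=
  (fun s : Finset ι => ∑ a ∈ s, ‖x a‖) '' F.sets

lemma normValues_nonempty (F : CombFamily ι) (x : ι →₀ 𝕂) : (normValues 𝕂 F x).Nonempty :=
  ⟨∑ a ∈ (∅ : Finset ι), ‖x a‖, ⟨∅, F.empty_mem, rfl⟩⟩

lemma normValues_bddAbove (F : CombFamily ι) (x : ι →₀ 𝕂) : BddAbove (normValues 𝕂 F x) := by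
  refine ⟨∑ a ∈ x.support, ‖x a‖, ?_⟩
  rintro r ⟨s, _, rfl⟩
  dsimp only
  have h1 : ∑ a ∈ s, ‖x a‖ = ∑ a ∈ s ∩ x.support, ‖x a‖ := by
    refine (Finset.sum_subset (Finset.inter_subset_left) ?_).symm
    intro a ha hna
    have : x a = 0 := by
      by_contra h
      exact hna (Finset.mem_inter.2 ⟨ha, Finsupp.mem_support_iff.2 h⟩)
    simp [this]
  rw [h1]
  exact Finset.sum_le_sum_of_subset_of_nonneg Finset.inter_subset_right
    (fun a _ _ => norm_nonneg _)

/-- The norm of the combinatorial space `X_F`: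
`‖x‖ = sup { ∑_{a ∈ s} |x a| : s ∈ F }`. -/
def combNorm (F : CombFamily ι) (x : ι →₀ 𝕂) : ℝ := sSup (normValues 𝕂 F x)

lemma sum_le_combNorm (F : CombFamily ι) (x : ι →₀ 𝕂) {s : Finset ι} (hs : s ∈ F.sets) :
    ∑ a ∈ s, ‖x a‖ ≤ combNorm 𝕂 F x :=
  le_csSup (normValues_bddAbove 𝕂 F x) ⟨s, hs, rfl⟩

lemma combNorm_le (F : CombFamily ι) (x : ι →₀ 𝕂) {c : ℝ}
    (h : ∀ s ∈ F.sets, ∑ a ∈ s, ‖x a‖ ≤ c) : combNorm 𝕂 F x ≤ c :=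
  csSup_le (normValues_nonempty 𝕂 F x) (by rintro r ⟨s, hs, rfl⟩; exact h s hs)

/-- The space of finitely supported functions `ι →₀ 𝕂`, regarded as a normed space
with the norm induced by the family `F`. -/
def C00 (F : CombFamily ι) (𝕂 : Type*) [RCLike 𝕂] : Type _ := ι →₀ 𝕂

variable {𝕂} in
/-- The identity map from `C00 F 𝕂` to `ι →₀ 𝕂`. -/
def C00.toFinsupp {F : CombFamily ι} (x : C00 F 𝕂) : ι →₀ 𝕂 := x

variable {𝕂} in
/-- The identity map from `ι →₀ 𝕂` to `C00 F 𝕂`. -/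
def C00.of (F : CombFamily ι) (x : ι →₀ 𝕂) : C00 F 𝕂 := x

instance (F : CombFamily ι) : AddCommGroup (C00 F 𝕂) :=
  inferInstanceAs (AddCommGroup (ι →₀ 𝕂))

instance (F : CombFamily ι) : Module 𝕂 (C00 F 𝕂) :=
  inferInstanceAs (Module 𝕂 (ι →₀ 𝕂))

variable {𝕂}

lemma C00.toFinsupp_add {F : CombFamily ι} (x y : C00 F 𝕂) :
    (x + y).toFinsupp = x.toFinsupp + y.toFinsupp := rfl

lemma C00.toFinsupp_neg {F : CombFamily ι} (x : C00 F 𝕂) :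
    (-x).toFinsupp = -x.toFinsupp := rfl

lemma C00.toFinsupp_smul {F : CombFamily ι} (c : 𝕂) (x : C00 F 𝕂) :
    (c • x).toFinsupp = c • x.toFinsupp := rfl

variable (𝕂)

instance C00.instNormedAddCommGroup (F : CombFamily ι) : NormedAddCommGroup (C00 F 𝕂) :=
  AddGroupNorm.toNormedAddCommGroup
    { toFun := fun x => combNorm 𝕂 F x.toFinsupp
      map_zero' := by
        refine le_antisymm (combNorm_le 𝕂 F _ ?_) ?_
        · intro s _
          have : (0 : C00 F 𝕂).toFinsupp = 0 := rfl
          simp [this]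
        · have := sum_le_combNorm 𝕂 F (0 : C00 F 𝕂).toFinsupp F.empty_mem
          simpa using this
      add_le' := by
        intro x y
        refine combNorm_le 𝕂 F _ ?_
        intro s hs
        rw [C00.toFinsupp_add]
        calc ∑ a ∈ s, ‖(x.toFinsupp + y.toFinsupp) a‖
            ≤ ∑ a ∈ s, (‖x.toFinsupp a‖ + ‖y.toFinsupp a‖) := by
              refine Finset.sum_le_sum ?_
              intro a _
              rw [Finsupp.add_apply]
              exact norm_add_le _ _
          _ = (∑ a ∈ s, ‖x.toFinsupp a‖) + ∑ a ∈ s, ‖y.toFinsupp a‖ :=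
              Finset.sum_add_distrib
          _ ≤ combNorm 𝕂 F x.toFinsupp + combNorm 𝕂 F y.toFinsupp :=
              add_le_add (sum_le_combNorm 𝕂 F _ hs) (sum_le_combNorm 𝕂 F _ hs)
      neg' := by
        intro x
        rw [C00.toFinsupp_neg]
        have hfun : (fun s : Finset ι => ∑ a ∈ s, ‖(-x.toFinsupp) a‖)
            = fun s : Finset ι => ∑ a ∈ s, ‖x.toFinsupp a‖ := by
          funext s
          refine Finset.sum_congr rfl fun a _ => ?_
          rw [Finsupp.neg_apply, norm_neg]
        unfold combNorm normValues
        rw [hfun]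
      eq_zero_of_map_eq_zero' := by
        intro x hx
        have hα : ∀ a : ι, x.toFinsupp a = 0 := by
          intro a
          have h1 : ‖x.toFinsupp a‖ ≤ combNorm 𝕂 F x.toFinsupp := by
            have := sum_le_combNorm 𝕂 F x.toFinsupp (F.singleton_mem a)
            simpa using this
          rw [hx] at h1
          exact norm_eq_zero.1 (le_antisymm h1 (norm_nonneg _))
        have : x.toFinsupp = 0 := Finsupp.ext hα
        exact this }

lemma C00.norm_def {F : CombFamily ι} (x : C00 F 𝕂) : ‖x‖ = combNorm 𝕂 F x.toFinsupp := rfl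

instance C00.instNormedSpace (F : CombFamily ι) : NormedSpace 𝕂 (C00 F 𝕂) where
  norm_smul_le c x := by
    rw [C00.norm_def, C00.norm_def, C00.toFinsupp_smul]
    refine combNorm_le 𝕂 F _ ?_
    intro s hs
    have : ∑ a ∈ s, ‖(c • x.toFinsupp) a‖ = ‖c‖ * ∑ a ∈ s, ‖x.toFinsupp a‖ := by
      rw [Finset.mul_sum]
      refine Finset.sum_congr rfl ?_
      intro a _
      rw [Finsupp.smul_apply]
      exact norm_smul c _
    rw [this]
    exact mul_le_mul_of_nonneg_left (sum_le_combNorm 𝕂 F _ hs) (norm_nonneg c)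

/-- The combinatorial Banach space `X_F`: the completion of `c₀₀(ι)` under the norm
induced by the family `F`. -/
def XF (F : CombFamily ι) (𝕂 : Type*) [RCLike 𝕂] : Type _ :=
  UniformSpace.Completion (C00 F 𝕂)

instance (F : CombFamily ι) : NormedAddCommGroup (XF F 𝕂) :=
  inferInstanceAs (NormedAddCommGroup (UniformSpace.Completion (C00 F 𝕂)))

instance (F : CombFamily ι) : NormedSpace 𝕂 (XF F 𝕂) :=
  inferInstanceAs (NormedSpace 𝕂 (UniformSpace.Completion (C00 F 𝕂)))

instance (F : CombFamily ι) : CompleteSpace (XF F 𝕂) :=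
  inferInstanceAs (CompleteSpace (UniformSpace.Completion (C00 F 𝕂)))

/-- The canonical unit vector basis `(e_a)` of the combinatorial space `X_F`. -/
def unitVec (F : CombFamily ι) (a : ι) : XF F 𝕂 :=
  (UniformSpace.Completion.toComplₗᵢ (𝕜 := 𝕂) (E := C00 F 𝕂))
    (C00.of F (Finsupp.single a 1))

/-- The coordinate functional `e_a^*` on `c₀₀`, as a continuous linear map. -/
def coordC00 (F : CombFamily ι) (a : ι) : C00 F 𝕂 →L[𝕂] 𝕂 :=
  LinearMap.mkContinuous
    { toFun := fun x => x.toFinsupp a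
      map_add' := fun _ _ => rfl
      map_smul' := fun _ _ => rfl } 1
    (by
      intro x
      have h1 : ‖x.toFinsupp a‖ ≤ combNorm 𝕂 F x.toFinsupp := by
        have := sum_le_combNorm 𝕂 F x.toFinsupp (F.singleton_mem a)
        simpa using this
      rw [C00.norm_def]
      show ‖x.toFinsupp a‖ ≤ 1 * combNorm 𝕂 F x.toFinsupp
      simpa using h1)

/-- The coordinate functional `e_a^*` of the dual of the combinatorial space `X_F`. -/
def coordFn (F : CombFamily ι) (a : ι) : StrongDual 𝕂 (XF F 𝕂) :=
  (coordC00 𝕂 F a).extend (UniformSpace.Completion.toComplL : C00 F 𝕂 →L[𝕂] XF F 𝕂)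

/-- An extreme point of a convex set `B`: a point of `B` which is not a proper convex
combination of two distinct points of `B`. -/
def IsExtremePoint {E : Type*} [AddCommGroup E] [Module 𝕂 E] (B : Set E) (x : E) : Prop :=
  x ∈ B ∧ ∀ x₁ ∈ B, ∀ x₂ ∈ B, ∀ t : ℝ, 0 < t → t < 1 →
    x = (t : 𝕂) • x₁ + ((1 - t : ℝ) : 𝕂) • x₂ → x₁ = x₂


section Aux

lemma unitVec_eq_toComplL (F : CombFamily ι) (a : ι) :
    unitVec 𝕂 F a =
      (UniformSpace.Completion.toComplL : C00 F 𝕂 →L[𝕂] XF F 𝕂)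
        (C00.of F (Finsupp.single a 1)) := rfl

lemma coordFn_unitVec (F : CombFamily ι) (a b : ι) :
    coordFn 𝕂 F a (unitVec 𝕂 F b) = if b = a then 1 else 0 := by
  have h1 : coordFn 𝕂 F a (unitVec 𝕂 F b)
      = coordC00 𝕂 F a (C00.of F (Finsupp.single b 1)) :=
    ContinuousLinearMap.extend_eq _ UniformSpace.Completion.denseRange_coe
      (UniformSpace.Completion.isUniformInducing_coe _) _
  rw [h1]
  show (Finsupp.single b 1 : ι →₀ 𝕂) a = _
  rw [Finsupp.single_apply]

lemma weakDual_sum_apply (F : CombFamily ι) (s : Finset ι) (θ : ι → 𝕂) (x : XF F 𝕂) :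
    (∑ a ∈ s, θ a • StrongDual.toWeakDual (coordFn 𝕂 F a)) x
      = ∑ a ∈ s, θ a * coordFn 𝕂 F a x := by
  induction s using Finset.cons_induction with
  | empty => rfl
  | cons a s ha ih =>
      rw [Finset.sum_cons, Finset.sum_cons, ← ih]
      rfl

lemma weakDual_sum_apply_unitVec (F : CombFamily ι) (s : Finset ι) (θ : ι → 𝕂) (b : ι) :
    (∑ a ∈ s, θ a • StrongDual.toWeakDual (coordFn 𝕂 F a)) (unitVec 𝕂 F b)
      = if b ∈ s then θ b else 0 := by
  rw [weakDual_sum_apply]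
  have : ∀ a ∈ s, θ a * coordFn 𝕂 F a (unitVec 𝕂 F b)
      = if b = a then θ a else 0 := by
    intro a _
    rw [coordFn_unitVec]
    split_ifs <;> simp
  rw [Finset.sum_congr rfl this, Finset.sum_ite_eq]

lemma weakDual_ext_unitVec (F : CombFamily ι) (φ ψ : WeakDual 𝕂 (XF F 𝕂))
    (h : ∀ a, φ (unitVec 𝕂 F a) = ψ (unitVec 𝕂 F a)) : φ = ψ := by
  have hC : ∀ x : ι →₀ 𝕂,
      φ ((UniformSpace.Completion.toComplL : C00 F 𝕂 →L[𝕂] XF F 𝕂) (C00.of F x))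
        = ψ ((UniformSpace.Completion.toComplL : C00 F 𝕂 →L[𝕂] XF F 𝕂) (C00.of F x)) := by
    intro x
    induction x using Finsupp.induction_linear with
    | zero =>
        have h0 : (C00.of F (0 : ι →₀ 𝕂)) = (0 : C00 F 𝕂) := rfl
        rw [h0, map_zero]
        show φ (0 : XF F 𝕂) = ψ 0
        rw [map_zero, map_zero]
    | add f g hf hg =>
        have hadd : (C00.of F (f + g)) = C00.of F f + C00.of F g := rfl
        rw [hadd, map_add]
        have e1 := map_add φ ((UniformSpace.Completion.toComplL : C00 F 𝕂 →L[𝕂] XF F 𝕂) (C00.of F f)) ((UniformSpace.Completion.toComplL : C00 F 𝕂 →L[𝕂] XF F 𝕂) (C00.of F g))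
        have e2 := map_add ψ ((UniformSpace.Completion.toComplL : C00 F 𝕂 →L[𝕂] XF F 𝕂) (C00.of F f)) ((UniformSpace.Completion.toComplL : C00 F 𝕂 →L[𝕂] XF F 𝕂) (C00.of F g))
        exact e1.trans ((congrArg₂ (· + ·) hf hg).trans e2.symm)
    | single a c =>
        have hs : (C00.of F (Finsupp.single a c)) = c • C00.of F (Finsupp.single a 1) := by
          have e : (Finsupp.single a c : ι →₀ 𝕂) = c • Finsupp.single a 1 := by
            rw [Finsupp.smul_single, smul_eq_mul, mul_one]
          exact congrArg (C00.of F) e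
        rw [hs, map_smul]
        have e1 := map_smul φ c ((UniformSpace.Completion.toComplL : C00 F 𝕂 →L[𝕂] XF F 𝕂) (C00.of F (Finsupp.single a 1)))
        have e2 := map_smul ψ c ((UniformSpace.Completion.toComplL : C00 F 𝕂 →L[𝕂] XF F 𝕂) (C00.of F (Finsupp.single a 1)))
        have := h a
        rw [unitVec_eq_toComplL] at this
        exact e1.trans ((congrArg (c • ·) this).trans e2.symm)
  apply DFunLike.ext
  intro y
  refine UniformSpace.Completion.induction_on
    (p := fun y : XF F 𝕂 => φ y = ψ y) y ?_ ?_
  · exact isClosed_eq (map_continuous φ) (map_continuous ψ)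
  · intro x
    have := hC x.toFinsupp
    rwa [UniformSpace.Completion.coe_toComplL] at this

end Aux

/-- For a compact hereditary family `F` on an infinite cardinal, the set
`{ Σ_{ξ∈s} θ_ξ e_ξ^* : s ∈ F, |θ_ξ| = 1 }` is weak*-closed in the dual of `X_F`. -/
theorem statement4 {ι : Type*} [Infinite ι] {𝕂 : Type*} [RCLike 𝕂]
    (F : CombFamily ι)
    (hFc : IsCompactFam F.sets) (hFh : IsHereditary F.sets) :
    IsClosed {φ : WeakDual 𝕂 (XF F 𝕂) |
      ∃ s ∈ F.sets, ∃ θ : ι → 𝕂, (∀ a ∈ s, ‖θ a‖ = 1) ∧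
        φ = ∑ a ∈ s, θ a • StrongDual.toWeakDual (coordFn 𝕂 F a)} := by
  set S := {φ : WeakDual 𝕂 (XF F 𝕂) |
      ∃ s ∈ F.sets, ∃ θ : ι → 𝕂, (∀ a ∈ s, ‖θ a‖ = 1) ∧
        φ = ∑ a ∈ s, θ a • StrongDual.toWeakDual (coordFn 𝕂 F a)} with hS
  apply isClosed_of_closure_subset
  intro φ hφ
  have heval : ∀ b : ι, Continuous fun ψ : WeakDual 𝕂 (XF F 𝕂) => ψ (unitVec 𝕂 F b) :=
    fun b => WeakDual.eval_continuous _
  -- values of members of S at unit vectors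
  have hSval : ∀ ψ ∈ S, ∀ b : ι, ‖ψ (unitVec 𝕂 F b)‖ = 1 ∨ ψ (unitVec 𝕂 F b) = 0 := by
    rintro ψ ⟨s, hs, θ, hθ, rfl⟩ b
    rw [weakDual_sum_apply_unitVec]
    split_ifs with h
    · exact Or.inl (hθ b h)
    · exact Or.inr rfl
  -- step 1: values of φ are of norm 1 or zero
  have hval : ∀ b : ι, ‖φ (unitVec 𝕂 F b)‖ = 1 ∨ φ (unitVec 𝕂 F b) = 0 := by
    intro b
    have hcl : IsClosed {c : 𝕂 | ‖c‖ = 1 ∨ c = 0} := by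
      have : {c : 𝕂 | ‖c‖ = 1 ∨ c = 0} = {c : 𝕂 | ‖c‖ = 1} ∪ {c : 𝕂 | c = 0} := by
        ext c; simp [Set.mem_union]; tauto
      rw [this]
      exact ((isClosed_eq continuous_norm continuous_const).union
        (isClosed_eq continuous_id continuous_const))
    have hmem : φ (unitVec 𝕂 F b) ∈ closure {c : 𝕂 | ‖c‖ = 1 ∨ c = 0} :=
      map_mem_closure (f := fun ψ : WeakDual 𝕂 (XF F 𝕂) => ψ (unitVec 𝕂 F b))
        (heval b) hφ (fun ψ hψ => hSval ψ hψ b)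
    rwa [hcl.closure_eq] at hmem
  -- the candidate characteristic function
  set f : ι → Bool := fun b => decide (φ (unitVec 𝕂 F b) ≠ 0) with hfdef
  -- step 2: f belongs to the closure of chiImg F.sets
  have hfcl : f ∈ closure (chiImg F.sets) := by
    rw [mem_closure_iff_nhds]
    intro U hU
    rw [nhds_pi, Filter.mem_pi] at hU
    obtain ⟨I, hIfin, t, ht, hsub⟩ := hU
    -- find ψ ∈ S close to φ on the finite set I
    set V : Set (WeakDual 𝕂 (XF F 𝕂)) :=
      {ψ | ∀ b ∈ hIfin.toFinset, ‖ψ (unitVec 𝕂 F b) - φ (unitVec 𝕂 F b)‖ < 1/2} with hVdef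
    have hVnhds : V ∈ nhds φ := by
      have hVeq : V = ⋂ b ∈ hIfin.toFinset,
          {ψ : WeakDual 𝕂 (XF F 𝕂) | ‖ψ (unitVec 𝕂 F b) - φ (unitVec 𝕂 F b)‖ < 1/2} := by
        ext ψ; simp [hVdef]
      rw [hVeq, Filter.biInter_finset_mem]
      intro b _
      have hopen : IsOpen {ψ : WeakDual 𝕂 (XF F 𝕂) |
          ‖ψ (unitVec 𝕂 F b) - φ (unitVec 𝕂 F b)‖ < 1/2} :=
        isOpen_lt (((heval b).sub continuous_const).norm) continuous_const
      exact hopen.mem_nhds (by simp)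
    obtain ⟨ψ, hψV, hψS⟩ := (mem_closure_iff_nhds.1 hφ) V hVnhds
    obtain ⟨s, hs, θ, hθ, rfl⟩ := hψS
    refine ⟨chi s, ?_, ⟨s, hs, rfl⟩⟩
    apply hsub
    intro b hb
    have hbI : b ∈ hIfin.toFinset := hIfin.mem_toFinset.2 hb
    have hclose := hψV b hbI
    rw [weakDual_sum_apply_unitVec] at hclose
    have hchi : chi s b = f b := by
      rw [hfdef]
      simp only [chi]
      rw [decide_eq_decide]
      constructor
      · intro hbs hzero
        rw [if_pos hbs, hzero, sub_zero] at hclose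
        have := hθ b hbs
        linarith [hclose, this.ge.trans_lt hclose]
      · intro hne
        by_contra hbs
        rw [if_neg hbs, zero_sub, norm_neg] at hclose
        rcases hval b with h1 | h0
        · linarith
        · exact hne h0
    rw [hchi]
    exact mem_of_mem_nhds (ht b)
  have hfF : f ∈ chiImg F.sets := by rwa [hFc.closure_eq] at hfcl
  obtain ⟨s₀, hs₀, hchi₀⟩ := hfF
  have hmem_iff : ∀ b : ι, b ∈ s₀ ↔ φ (unitVec 𝕂 F b) ≠ 0 := by
    intro b
    have := congrFun hchi₀ b
    simp only [chi, hfdef] at this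
    exact decide_eq_decide.1 this
  refine ⟨s₀, hs₀, fun b => φ (unitVec 𝕂 F b), ?_, ?_⟩
  · intro b hb
    rcases hval b with h1 | h0
    · exact h1
    · exact absurd h0 ((hmem_iff b).1 hb)
  · apply weakDual_ext_unitVec
    intro b
    rw [weakDual_sum_apply_unitVec]
    split_ifs with h
    · rfl
    · by_contra hne
      exact absurd ((hmem_iff b).2 hne) h
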